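/- For every integer n ≥ 0, the following identity of polynomials in two variables u₁, u₂ over ℚ holds: ∑_{π ∈ Inv(n)} u₁^{α₁(π)} u₂^{α₂(π)} = ∑_{0 ≤ k ≤ n/2} (n! / (2^k · k! · (n − 2k)!)) · u₁^{n−2k} u₂^k, where the left sum is over all involutions π in S_n and the right sum is over integers k with 0 ≤ 2k ≤ n. (This is the coefficient of t^n/n! in e^{u₁ t + u₂ t²/2}.) -/

import Mathlib

open scoped BigOperators

/-- The number of fixed points of a permutation of `Fin n`. -/
def fixedPts {n : ℕ} (π : Equiv.Perm (Fin n)) : ℕ :=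
  (Finset.univ.filter fun i => π i = i).card

/-- The number of 2-cycles of an involution of `Fin n`: since `α₁(π) + 2α₂(π) = n`,
it equals `(n − α₁(π)) / 2`. -/
def twoCycles {n : ℕ} (π : Equiv.Perm (Fin n)) : ℕ :=
  (n - fixedPts π) / 2

section Aux
open Equiv Finset MvPolynomial

lemma fixedPts_sum {n : ℕ} (π : Equiv.Perm (Fin n)) :
    fixedPts π = ∑ i : Fin n, if π i = i then 1 else 0 := by
  rw [fixedPts, Finset.card_filter]

lemma fixedPts_le {n : ℕ} (π : Equiv.Perm (Fin n)) : fixedPts π ≤ n := by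
  classical
  calc fixedPts π ≤ (Finset.univ : Finset (Fin n)).card := Finset.card_filter_le _ _
  _ = n := by simp

lemma fp_zero {n : ℕ} (e : Equiv.Perm (Fin n)) :
    fixedPts (Equiv.Perm.decomposeFin.symm (0, e)) = fixedPts e + 1 := by
  rw [fixedPts_sum, fixedPts_sum, Fin.sum_univ_succ]
  simp [Equiv.Perm.decomposeFin_symm_apply_zero, Equiv.Perm.decomposeFin_symm_apply_succ,
    Equiv.swap_self, Fin.succ_inj, add_comm]

lemma tc_zero {n : ℕ} (e : Equiv.Perm (Fin n)) :
    twoCycles (Equiv.Perm.decomposeFin.symm (0, e)) = twoCycles e := by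
  have h := fixedPts_le e
  simp only [twoCycles, fp_zero]
  omega

lemma symm_zero_mul {n : ℕ} (e f : Equiv.Perm (Fin n)) :
    Equiv.Perm.decomposeFin.symm (0, e * f) =
      Equiv.Perm.decomposeFin.symm (0, e) * Equiv.Perm.decomposeFin.symm (0, f) := by
  ext x
  refine Fin.cases ?_ (fun i => ?_) x
  · simp [Equiv.Perm.decomposeFin_symm_apply_zero, Equiv.Perm.mul_apply]
  · simp [Equiv.Perm.decomposeFin_symm_apply_succ, Equiv.swap_self, Equiv.Perm.mul_apply]

lemma inv_zero_iff {n : ℕ} (e : Equiv.Perm (Fin n)) :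
    Equiv.Perm.decomposeFin.symm (0, e) * Equiv.Perm.decomposeFin.symm (0, e) = 1 ↔
      e * e = 1 := by
  constructor
  · intro h
    rw [← symm_zero_mul] at h
    have h1 : Equiv.Perm.decomposeFin.symm ((0 : Fin (n+1)), (1 : Equiv.Perm (Fin n))) = 1 := by
      rw [Equiv.Perm.decomposeFin_symm_of_one]
      simp [Equiv.swap_self]
      rfl
    rw [← h1] at h
    have := Equiv.Perm.decomposeFin.symm.injective h
    exact (Prod.mk.injEq _ _ _ _ ▸ this).2
  · intro h
    rw [← symm_zero_mul, h]
    rw [Equiv.Perm.decomposeFin_symm_of_one]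
    simp [Equiv.swap_self]
    rfl

lemma apply_succ_ne {n : ℕ} (e : Equiv.Perm (Fin n)) (j i : Fin n)
    (hej : e j = j) (hij : i ≠ j) :
    Equiv.Perm.decomposeFin.symm (j.succ, e) i.succ = (e i).succ := by
  rw [Equiv.Perm.decomposeFin_symm_apply_succ]
  have h1 : (e i).succ ≠ 0 := Fin.succ_ne_zero _
  have h2 : (e i).succ ≠ j.succ := by
    simp only [ne_eq, Fin.succ_inj]
    intro h
    exact hij (e.injective (h.trans hej.symm))
  exact Equiv.swap_apply_of_ne_of_ne h1 h2

lemma inv_succ_iff {n : ℕ} (e : Equiv.Perm (Fin n)) (j : Fin n) :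
    Equiv.Perm.decomposeFin.symm (j.succ, e) * Equiv.Perm.decomposeFin.symm (j.succ, e) = 1 ↔
      (e * e = 1 ∧ e j = j) := by
  set π := Equiv.Perm.decomposeFin.symm (j.succ, e) with hπ
  have hz : π 0 = j.succ := Equiv.Perm.decomposeFin_symm_apply_zero _ _
  constructor
  · intro h
    have hap : ∀ x, π (π x) = x := by
      intro x
      rw [← Equiv.Perm.mul_apply, h, Equiv.Perm.one_apply]
    -- first, e j = j
    have hjj : e j = j := by
      have h0 := hap 0
      rw [hz] at h0
      rw [hπ, Equiv.Perm.decomposeFin_symm_apply_succ] at h0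
      -- swap 0 j.succ ((e j).succ) = 0
      have : (e j).succ = j.succ := by
        have := congrArg (Equiv.swap (0 : Fin (n+1)) j.succ) h0
        rwa [Equiv.swap_apply_self, Equiv.swap_apply_left] at this
      exact Fin.succ_inj.mp this
    refine ⟨?_, hjj⟩
    apply Equiv.ext; intro i
    rw [Equiv.Perm.mul_apply, Equiv.Perm.one_apply]
    by_cases hij : i = j
    · subst hij; rw [hjj, hjj]
    · have h1 : π i.succ = (e i).succ := apply_succ_ne e j i hjj hij
      have hei : e i ≠ j := fun h => hij (e.injective (h.trans hjj.symm))
      by_cases heei : e (e i) = j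
      · exfalso
        have h2 := hap i.succ
        rw [h1] at h2
        rw [hπ, Equiv.Perm.decomposeFin_symm_apply_succ, heei] at h2
        rw [Equiv.swap_apply_right] at h2
        exact Fin.succ_ne_zero i h2.symm
      · have h2 := hap i.succ
        rw [h1, apply_succ_ne e j (e i) hjj hei] at h2
        exact Fin.succ_inj.mp h2
  · rintro ⟨h1, h2⟩
    have hsq : ∀ x, e (e x) = x := by
      intro x
      rw [← Equiv.Perm.mul_apply, h1, Equiv.Perm.one_apply]
    apply Equiv.ext; intro x
    rw [Equiv.Perm.mul_apply, Equiv.Perm.one_apply]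
    refine Fin.cases ?_ (fun i => ?_) x
    · rw [hz, hπ, Equiv.Perm.decomposeFin_symm_apply_succ, h2, Equiv.swap_apply_right]
    · by_cases hij : i = j
      · subst hij
        have hjs : π i.succ = 0 := by
          rw [hπ, Equiv.Perm.decomposeFin_symm_apply_succ, h2, Equiv.swap_apply_right]
        rw [hjs, hz]
      · have hei : e i ≠ j := fun h => hij (e.injective (h.trans h2.symm))
        rw [apply_succ_ne e j i h2 hij, apply_succ_ne e j (e i) h2 hei, hsq]

lemma fp_succ {n : ℕ} (e : Equiv.Perm (Fin n)) (j : Fin n) (hej : e j = j) :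
    fixedPts (Equiv.Perm.decomposeFin.symm (j.succ, e)) + 1 = fixedPts e := by
  set π := Equiv.Perm.decomposeFin.symm (j.succ, e) with hπ
  rw [fixedPts_sum, fixedPts_sum, Fin.sum_univ_succ]
  have hz : π 0 = j.succ := Equiv.Perm.decomposeFin_symm_apply_zero _ _
  have h0 : (if π 0 = 0 then 1 else 0) = 0 := by
    rw [hz]; simp [Fin.succ_ne_zero]
  rw [h0, zero_add]
  have hsplit : ∀ (g : Fin n → ℕ),
      ∑ i : Fin n, g i = g j + ∑ i ∈ Finset.univ.erase j, g i := by
    intro g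
    rw [Finset.add_sum_erase _ g (Finset.mem_univ j)]
  rw [hsplit, hsplit (fun i => if e i = i then 1 else 0)]
  have hgj : (if π j.succ = j.succ then 1 else 0) = 0 := by
    have : π j.succ = 0 := by
      rw [hπ, Equiv.Perm.decomposeFin_symm_apply_succ, hej, Equiv.swap_apply_right]
    rw [this]
    simp [(Fin.succ_ne_zero j).symm]
  have hhj : (if e j = j then 1 else 0) = 1 := by simp [hej]
  rw [hgj, hhj]
  have : ∀ i ∈ Finset.univ.erase j,
      (if π i.succ = i.succ then 1 else 0) = (if e i = i then 1 else 0) := by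
    intro i hi
    have hij : i ≠ j := Finset.ne_of_mem_erase hi
    rw [hπ, apply_succ_ne e j i hej hij]
    simp [Fin.succ_inj]
  rw [Finset.sum_congr rfl this]
  omega

lemma fp_pos {n : ℕ} (e : Equiv.Perm (Fin n)) (j : Fin n) (hej : e j = j) :
    0 < fixedPts e := by
  refine Finset.card_pos.mpr ⟨j, ?_⟩
  simp [hej]

lemma tc_succ {n : ℕ} (e : Equiv.Perm (Fin n)) (j : Fin n) (hej : e j = j) :
    twoCycles (Equiv.Perm.decomposeFin.symm (j.succ, e)) = twoCycles e + 1 := by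
  have h1 := fp_succ e j hej
  have h2 := fixedPts_le e
  have h3 := fp_pos e j hej
  simp only [twoCycles]
  omega

lemma fixedPts_conj {n : ℕ} (s e : Equiv.Perm (Fin n)) :
    fixedPts (s * e * s⁻¹) = fixedPts e := by
  rw [fixedPts_sum, fixedPts_sum]
  rw [← Equiv.sum_comp s (fun i => if (s * e * s⁻¹) i = i then (1:ℕ) else 0)]
  refine Finset.sum_congr rfl fun i _ => ?_
  have : (s * e * s⁻¹) (s i) = s i ↔ e i = i := by
    rw [Equiv.Perm.mul_apply, Equiv.Perm.mul_apply, Equiv.Perm.inv_def, Equiv.symm_apply_apply]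
    exact ⟨fun h => s.injective h, fun h => by rw [h]⟩
  simp only [this]

noncomputable def Tn (n : ℕ) : MvPolynomial (Fin 2) ℚ :=
  ∑ π ∈ (Finset.univ.filter fun π : Equiv.Perm (Fin n) => π * π = 1),
      (MvPolynomial.X 0 : MvPolynomial (Fin 2) ℚ) ^ fixedPts π *
        MvPolynomial.X 1 ^ twoCycles π

lemma Tn_eq_sum_ite (n : ℕ) : Tn n =
    ∑ π : Equiv.Perm (Fin n), if π * π = 1 then
      (MvPolynomial.X 0 : MvPolynomial (Fin 2) ℚ) ^ fixedPts π *
        MvPolynomial.X 1 ^ twoCycles π else 0 := by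
  rw [Tn, Finset.sum_filter]

-- Sum over involutions of Fin (n+1) fixing 0
lemma S1 (n : ℕ) :
    (∑ e : Equiv.Perm (Fin (n+1)), if (e * e = 1 ∧ e 0 = 0) then
      (MvPolynomial.X 0 : MvPolynomial (Fin 2) ℚ) ^ (fixedPts e - 1) *
        MvPolynomial.X 1 ^ (twoCycles e + 1) else 0) =
    MvPolynomial.X 1 * Tn n := by
  classical
  rw [Tn_eq_sum_ite, Finset.mul_sum]
  rw [Fintype.sum_equiv (Equiv.Perm.decomposeFin (n := n))
    (fun π => if (π * π = 1 ∧ π 0 = 0) then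
      (MvPolynomial.X 0 : MvPolynomial (Fin 2) ℚ) ^ (fixedPts π - 1) *
        MvPolynomial.X 1 ^ (twoCycles π + 1) else 0)
    (fun pe => if ((Equiv.Perm.decomposeFin.symm pe) * (Equiv.Perm.decomposeFin.symm pe) = 1
        ∧ (Equiv.Perm.decomposeFin.symm pe) 0 = 0) then
      (MvPolynomial.X 0 : MvPolynomial (Fin 2) ℚ) ^ (fixedPts (Equiv.Perm.decomposeFin.symm pe) - 1) *
        MvPolynomial.X 1 ^ (twoCycles (Equiv.Perm.decomposeFin.symm pe) + 1) else 0)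
    (fun π => by simp)]
  rw [Fintype.sum_prod_type, Fin.sum_univ_succ]
  have hzero : ∀ (j : Fin n) ,
      (∑ e : Equiv.Perm (Fin n), if ((Equiv.Perm.decomposeFin.symm (Fin.succ j, e)) *
          (Equiv.Perm.decomposeFin.symm (Fin.succ j, e)) = 1
          ∧ (Equiv.Perm.decomposeFin.symm (Fin.succ j, e)) 0 = 0) then
        (MvPolynomial.X 0 : MvPolynomial (Fin 2) ℚ) ^
            (fixedPts (Equiv.Perm.decomposeFin.symm (Fin.succ j, e)) - 1) *
          MvPolynomial.X 1 ^ (twoCycles (Equiv.Perm.decomposeFin.symm (Fin.succ j, e)) + 1)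
        else 0) = 0 := by
    intro j
    refine Finset.sum_eq_zero fun e _ => ?_
    rw [if_neg]
    rintro ⟨-, h0⟩
    rw [Equiv.Perm.decomposeFin_symm_apply_zero] at h0
    exact Fin.succ_ne_zero j h0
  rw [Finset.sum_congr rfl (fun j _ => hzero j), Finset.sum_const, smul_zero, add_zero]
  refine Finset.sum_congr rfl fun e _ => ?_
  have hc : (Equiv.Perm.decomposeFin.symm ((0 : Fin (n+1)), e)) *
      (Equiv.Perm.decomposeFin.symm (0, e)) = 1 ∧
      (Equiv.Perm.decomposeFin.symm ((0 : Fin (n+1)), e)) 0 = 0 ↔ e * e = 1 := by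
    rw [inv_zero_iff, Equiv.Perm.decomposeFin_symm_apply_zero]
    simp
  rw [if_congr hc rfl rfl]
  by_cases he : e * e = 1
  · rw [if_pos he, if_pos he, fp_zero, tc_zero]
    simp only [Nat.add_sub_cancel]
    ring
  · rw [if_neg he, if_neg he, mul_zero]

lemma S2 (n : ℕ) (j : Fin (n+1)) :
    (∑ e : Equiv.Perm (Fin (n+1)), if (e * e = 1 ∧ e j = j) then
      (MvPolynomial.X 0 : MvPolynomial (Fin 2) ℚ) ^ (fixedPts e - 1) *
        MvPolynomial.X 1 ^ (twoCycles e + 1) else 0) =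
    MvPolynomial.X 1 * Tn n := by
  classical
  rw [← S1 n]
  set s : Equiv.Perm (Fin (n+1)) := Equiv.swap 0 j with hs
  refine Fintype.sum_equiv (MulAut.conj s).toEquiv _ _ fun e => ?_
  have hφ : (MulAut.conj s).toEquiv e = s * e * s⁻¹ := rfl
  rw [hφ]
  have hsinv : s⁻¹ = s := Equiv.swap_inv 0 j
  rw [hsinv]
  have hss : ∀ x, s (s x) = x := fun x => Equiv.swap_apply_self 0 j x
  have hc1 : (s * e * s) * (s * e * s) = 1 ↔ e * e = 1 := by
    have h1 : (s * e * s) * (s * e * s) = s * (e * e) * s⁻¹ := by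
      rw [hsinv]
      apply Equiv.ext; intro x
      simp [Equiv.Perm.mul_apply, hss]
    rw [h1, conj_eq_one_iff]
  have hc2 : (s * e * s) 0 = 0 ↔ e j = j := by
    have hs0 : s 0 = j := Equiv.swap_apply_left 0 j
    rw [Equiv.Perm.mul_apply, Equiv.Perm.mul_apply, hs0]
    constructor
    · intro h
      have := congrArg s h
      rwa [hss, hs0] at this
    · intro h; rw [h, ← hs0, hss]
  have hcc := hc1.and hc2
  have hF : fixedPts (s * e * s) = fixedPts e := by
    have := fixedPts_conj s e
    rwa [hsinv] at this
  have hT : twoCycles (s * e * s) = twoCycles e := by rw [twoCycles, hF]; rfl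
  by_cases h : e * e = 1 ∧ e j = j
  · rw [if_pos h, if_pos (hcc.mpr h), hF, hT]
  · rw [if_neg h, if_neg (fun hh => h (hcc.mp hh))]

lemma Trec (n : ℕ) :
    Tn (n+2) = MvPolynomial.X 0 * Tn (n+1) + (n+1) • (MvPolynomial.X 1 * Tn n) := by
  classical
  rw [Tn_eq_sum_ite (n+2)]
  rw [Fintype.sum_equiv (Equiv.Perm.decomposeFin (n := n+1))
    (fun π => if π * π = 1 then
      (MvPolynomial.X 0 : MvPolynomial (Fin 2) ℚ) ^ fixedPts π *
        MvPolynomial.X 1 ^ twoCycles π else 0)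
    (fun pe => if (Equiv.Perm.decomposeFin.symm pe) * (Equiv.Perm.decomposeFin.symm pe) = 1 then
      (MvPolynomial.X 0 : MvPolynomial (Fin 2) ℚ) ^ fixedPts (Equiv.Perm.decomposeFin.symm pe) *
        MvPolynomial.X 1 ^ twoCycles (Equiv.Perm.decomposeFin.symm pe) else 0)
    (fun π => by simp)]
  rw [Fintype.sum_prod_type, Fin.sum_univ_succ]
  congr 1
  · -- p = 0 component equals X 0 * Tn (n+1)
    rw [Tn_eq_sum_ite (n+1), Finset.mul_sum]
    refine Finset.sum_congr rfl fun e _ => ?_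
    rw [if_congr (inv_zero_iff e) rfl rfl]
    by_cases he : e * e = 1
    · rw [if_pos he, if_pos he, fp_zero, tc_zero, pow_succ]
      ring
    · rw [if_neg he, if_neg he, mul_zero]
  · -- p = j.succ components
    have hj : ∀ j : Fin (n+1),
        (∑ e : Equiv.Perm (Fin (n+1)),
          if (Equiv.Perm.decomposeFin.symm (Fin.succ j, e)) *
              (Equiv.Perm.decomposeFin.symm (Fin.succ j, e)) = 1 then
            (MvPolynomial.X 0 : MvPolynomial (Fin 2) ℚ) ^
                fixedPts (Equiv.Perm.decomposeFin.symm (Fin.succ j, e)) *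
              MvPolynomial.X 1 ^ twoCycles (Equiv.Perm.decomposeFin.symm (Fin.succ j, e))
          else 0) = MvPolynomial.X 1 * Tn n := by
      intro j
      rw [← S2 n j]
      refine Finset.sum_congr rfl fun e _ => ?_
      rw [if_congr (inv_succ_iff e j) rfl rfl]
      by_cases he : e * e = 1 ∧ e j = j
      · rw [if_pos he, if_pos he]
        have h1 := fp_succ e j he.2
        have h2 := tc_succ e j he.2
        rw [h2, show fixedPts (Equiv.Perm.decomposeFin.symm (Fin.succ j, e)) = fixedPts e - 1
          from by omega]
      · rw [if_neg he, if_neg he]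
    rw [Finset.sum_congr rfl (fun j _ => hj j), Finset.sum_const, Finset.card_univ,
      Fintype.card_fin]

lemma Tn_zero : Tn 0 = 1 := by
  classical
  rw [Tn_eq_sum_ite]
  rw [Fintype.sum_eq_single (1 : Equiv.Perm (Fin 0)) (fun e he => absurd (Subsingleton.elim e 1) he)]
  have h1 : fixedPts (1 : Equiv.Perm (Fin 0)) = 0 := by
    simp [fixedPts]
  have h2 : twoCycles (1 : Equiv.Perm (Fin 0)) = 0 := by
    simp [twoCycles, h1]
  simp [h1, h2]

lemma Tn_one : Tn 1 = MvPolynomial.X 0 := by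
  classical
  rw [Tn_eq_sum_ite]
  rw [Fintype.sum_eq_single (1 : Equiv.Perm (Fin 1)) (fun e he => absurd (Subsingleton.elim e 1) he)]
  have h1 : fixedPts (1 : Equiv.Perm (Fin 1)) = 1 := by
    simp [fixedPts]
  have h2 : twoCycles (1 : Equiv.Perm (Fin 1)) = 0 := by
    simp [twoCycles, h1]
  simp [h1, h2]

def cc (n k : ℕ) : ℚ :=
  (n.factorial : ℚ) / (2 ^ k * k.factorial * (n - 2 * k).factorial)

noncomputable def Rn (n : ℕ) : MvPolynomial (Fin 2) ℚ :=
  ∑ k ∈ Finset.range (n / 2 + 1),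
    MvPolynomial.C (cc n k) * MvPolynomial.X 0 ^ (n - 2 * k) * MvPolynomial.X 1 ^ k

lemma cc_zero (n : ℕ) : cc n 0 = 1 := by
  have h : (n.factorial : ℚ) ≠ 0 := Nat.cast_ne_zero.mpr n.factorial_pos.ne'
  simp [cc, h]

lemma cc_rec (n k : ℕ) (hk : 1 ≤ k) (h : 2 * k ≤ n + 1) :
    cc (n+2) k = cc (n+1) k + (n+1) * cc n (k-1) := by
  obtain ⟨j, rfl⟩ : ∃ j, k = j + 1 := ⟨k - 1, by omega⟩
  obtain ⟨a, rfl⟩ : ∃ a, n = 2 * j + 1 + a := ⟨n - (2 * j + 1), by omega⟩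
  have e1 : 2 * j + 1 + a + 2 - 2 * (j + 1) = a + 1 := by omega
  have e2 : 2 * j + 1 + a + 1 - 2 * (j + 1) = a := by omega
  have e3 : 2 * j + 1 + a - 2 * j = a + 1 := by omega
  have f1 : (2 * j + 1 + a + 2).factorial =
      (2 * j + 1 + a + 2) * ((2 * j + 1 + a + 1) * (2 * j + 1 + a).factorial) := by
    rw [show 2 * j + 1 + a + 2 = (2 * j + 1 + a + 1) + 1 by omega, Nat.factorial_succ,
      Nat.factorial_succ]
  have f2 : (2 * j + 1 + a + 1).factorial = (2 * j + 1 + a + 1) * (2 * j + 1 + a).factorial :=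
    Nat.factorial_succ _
  have f3 : (a + 1).factorial = (a + 1) * a.factorial := Nat.factorial_succ _
  have f4 : (j + 1).factorial = (j + 1) * j.factorial := Nat.factorial_succ _
  simp only [cc, e1, e2, e3, Nat.add_sub_cancel, f1, f2, f3, f4]
  have hne : ∀ m : ℕ, (m.factorial : ℚ) ≠ 0 := fun m => Nat.cast_ne_zero.mpr m.factorial_pos.ne'
  have h2 : (2 : ℚ) ^ (j + 1) ≠ 0 := by positivity
  have h2' : (2 : ℚ) ^ j ≠ 0 := by positivity
  have hj1 : ((j : ℚ) + 1) ≠ 0 := by positivity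
  have ha1 : ((a : ℚ) + 1) ≠ 0 := by positivity
  push_cast
  field_simp
  ring

lemma cc_top (j : ℕ) : cc (2*j+2) (j+1) = (2*j+1) * cc (2*j) j := by
  have e1 : 2*j+2 - 2*(j+1) = 0 := by omega
  have e2 : 2*j - 2*j = 0 := by omega
  have f1 : (2*j+2).factorial = (2*j+2) * ((2*j+1) * (2*j).factorial) := by
    rw [show 2*j+2 = (2*j+1)+1 by omega, Nat.factorial_succ, Nat.factorial_succ]
  have f4 : (j + 1).factorial = (j + 1) * j.factorial := Nat.factorial_succ _
  simp only [cc, e1, e2, f1, f4, Nat.factorial_zero]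
  have hne : ∀ m : ℕ, (m.factorial : ℚ) ≠ 0 := fun m => Nat.cast_ne_zero.mpr m.factorial_pos.ne'
  have h2 : (2 : ℚ) ^ (j + 1) ≠ 0 := by positivity
  have h2' : (2 : ℚ) ^ j ≠ 0 := by positivity
  have hj1 : ((j : ℚ) + 1) ≠ 0 := by positivity
  push_cast
  field_simp
  ring

lemma Rrec (n : ℕ) :
    Rn (n+2) = MvPolynomial.X 0 * Rn (n+1) + (n+1) • (MvPolynomial.X 1 * Rn n) := by
  have hC : ∀ (k : ℕ) (x : MvPolynomial (Fin 2) ℚ), k • x = MvPolynomial.C (k : ℚ) * x := by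
    intro k x; rw [nsmul_eq_mul, map_natCast]
  obtain ⟨m, rfl | rfl⟩ : ∃ m, n = 2*m ∨ n = 2*m+1 := ⟨n/2, by omega⟩
  · -- even case
    rw [hC, Rn, Rn, Rn,
      show (2*m+2)/2 + 1 = (m+1) + 1 by omega,
      show (2*m+1)/2 + 1 = m+1 by omega,
      show (2*m)/2 + 1 = m+1 by omega]
    rw [Finset.sum_range_succ'
      (fun k => MvPolynomial.C (cc (2*m+2) k) * MvPolynomial.X 0 ^ (2*m+2 - 2*k) *
        MvPolynomial.X 1 ^ k) (m+1)]
    rw [Finset.sum_range_succ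
      (fun k => MvPolynomial.C (cc (2*m+2) (k+1)) * MvPolynomial.X 0 ^ (2*m+2 - 2*(k+1)) *
        MvPolynomial.X 1 ^ (k+1)) m]
    rw [Finset.sum_range_succ'
      (fun k => MvPolynomial.C (cc (2*m+1) k) * MvPolynomial.X 0 ^ (2*m+1 - 2*k) *
        MvPolynomial.X 1 ^ k) m]
    rw [Finset.sum_range_succ
      (fun k => MvPolynomial.C (cc (2*m) k) * MvPolynomial.X 0 ^ (2*m - 2*k) *
        MvPolynomial.X 1 ^ k) m]
    have key1 : ∀ k ∈ Finset.range m,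
        MvPolynomial.C (cc (2*m+2) (k+1)) * MvPolynomial.X 0 ^ (2*m+2 - 2*(k+1)) *
          (MvPolynomial.X 1 : MvPolynomial (Fin 2) ℚ) ^ (k+1) =
        MvPolynomial.X 0 * (MvPolynomial.C (cc (2*m+1) (k+1)) *
            MvPolynomial.X 0 ^ (2*m+1 - 2*(k+1)) * MvPolynomial.X 1 ^ (k+1)) +
        MvPolynomial.C (((2*m+1 : ℕ) : ℚ)) * (MvPolynomial.X 1 * (MvPolynomial.C (cc (2*m) k) *
            MvPolynomial.X 0 ^ (2*m - 2*k) * MvPolynomial.X 1 ^ k)) := by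
      intro k hk
      rw [Finset.mem_range] at hk
      rw [cc_rec (2*m) (k+1) (by omega) (by omega), show k+1-1 = k by omega, map_add, map_mul,
        show 2*m+2 - 2*(k+1) = (2*m+1 - 2*(k+1)) + 1 by omega,
        show 2*m - 2*k = (2*m+1 - 2*(k+1)) + 1 by omega]
      push_cast
      ring
    have key2 : MvPolynomial.C (cc (2*m+2) (m+1)) * MvPolynomial.X 0 ^ (2*m+2 - 2*(m+1)) *
        (MvPolynomial.X 1 : MvPolynomial (Fin 2) ℚ) ^ (m+1) =
        MvPolynomial.C (((2*m+1 : ℕ) : ℚ)) * (MvPolynomial.X 1 * (MvPolynomial.C (cc (2*m) m) *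
          MvPolynomial.X 0 ^ (2*m - 2*m) * MvPolynomial.X 1 ^ m)) := by
      rw [cc_top, map_mul, show 2*m+2 - 2*(m+1) = 0 by omega, show 2*m - 2*m = 0 by omega]
      push_cast
      ring
    have key3 : MvPolynomial.C (cc (2*m+2) 0) * MvPolynomial.X 0 ^ (2*m+2 - 2*0) *
        (MvPolynomial.X 1 : MvPolynomial (Fin 2) ℚ) ^ 0 =
        MvPolynomial.X 0 * (MvPolynomial.C (cc (2*m+1) 0) * MvPolynomial.X 0 ^ (2*m+1 - 2*0) *
          MvPolynomial.X 1 ^ 0) := by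
      rw [cc_zero, cc_zero, show 2*m+2 - 2*0 = (2*m+1 - 2*0) + 1 by omega]
      ring
    rw [Finset.sum_congr rfl key1, Finset.sum_add_distrib, key2, key3]
    simp only [mul_add, Finset.mul_sum]
    ring
  · -- odd case
    rw [hC, Rn, Rn, Rn,
      show (2*m+1+2)/2 + 1 = (m+1) + 1 by omega,
      show (2*m+1+1)/2 + 1 = (m+1) + 1 by omega,
      show (2*m+1)/2 + 1 = m+1 by omega]
    rw [Finset.sum_range_succ'
      (fun k => MvPolynomial.C (cc (2*m+1+2) k) * MvPolynomial.X 0 ^ (2*m+1+2 - 2*k) *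
        MvPolynomial.X 1 ^ k) (m+1)]
    rw [Finset.sum_range_succ'
      (fun k => MvPolynomial.C (cc (2*m+1+1) k) * MvPolynomial.X 0 ^ (2*m+1+1 - 2*k) *
        MvPolynomial.X 1 ^ k) (m+1)]
    have key1 : ∀ k ∈ Finset.range (m+1),
        MvPolynomial.C (cc (2*m+1+2) (k+1)) * MvPolynomial.X 0 ^ (2*m+1+2 - 2*(k+1)) *
          (MvPolynomial.X 1 : MvPolynomial (Fin 2) ℚ) ^ (k+1) =
        MvPolynomial.X 0 * (MvPolynomial.C (cc (2*m+1+1) (k+1)) *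
            MvPolynomial.X 0 ^ (2*m+1+1 - 2*(k+1)) * MvPolynomial.X 1 ^ (k+1)) +
        MvPolynomial.C (((2*m+1+1 : ℕ) : ℚ)) * (MvPolynomial.X 1 * (MvPolynomial.C (cc (2*m+1) k) *
            MvPolynomial.X 0 ^ (2*m+1 - 2*k) * MvPolynomial.X 1 ^ k)) := by
      intro k hk
      rw [Finset.mem_range] at hk
      rw [cc_rec (2*m+1) (k+1) (by omega) (by omega), show k+1-1 = k by omega, map_add, map_mul,
        show 2*m+1+2 - 2*(k+1) = (2*m+1+1 - 2*(k+1)) + 1 by omega,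
        show 2*m+1 - 2*k = (2*m+1+1 - 2*(k+1)) + 1 by omega]
      push_cast
      ring
    have key3 : MvPolynomial.C (cc (2*m+1+2) 0) * MvPolynomial.X 0 ^ (2*m+1+2 - 2*0) *
        (MvPolynomial.X 1 : MvPolynomial (Fin 2) ℚ) ^ 0 =
        MvPolynomial.X 0 * (MvPolynomial.C (cc (2*m+1+1) 0) * MvPolynomial.X 0 ^ (2*m+1+1 - 2*0) *
          MvPolynomial.X 1 ^ 0) := by
      rw [cc_zero, cc_zero, show 2*m+1+2 - 2*0 = (2*m+1+1 - 2*0) + 1 by omega]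
      ring
    rw [Finset.sum_congr rfl key1, Finset.sum_add_distrib, key3]
    simp only [mul_add, Finset.mul_sum]
    ring

lemma Rn_zero : Rn 0 = 1 := by
  rw [Rn]
  simp [cc_zero]

lemma Rn_one : Rn 1 = MvPolynomial.X 0 := by
  rw [Rn]
  simp [cc_zero]

lemma main : ∀ n, Tn n = Rn n := by
  intro n
  induction n using Nat.strong_induction_on with
  | _ n ih =>
    match n with
    | 0 => rw [Tn_zero, Rn_zero]
    | 1 => rw [Tn_one, Rn_one]
    | (n+2) =>
      rw [Trec, Rrec, ih (n+1) (by omega), ih n (by omega)]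


end Aux

/-- Touchard's formula for involutions, coefficientwise. -/
theorem involution_gf (n : ℕ) :
    ∑ π ∈ (Finset.univ.filter fun π : Equiv.Perm (Fin n) => π * π = 1),
        (MvPolynomial.X 0 : MvPolynomial (Fin 2) ℚ) ^ fixedPts π *
          MvPolynomial.X 1 ^ twoCycles π =
      ∑ k ∈ Finset.range (n / 2 + 1),
        MvPolynomial.C ((n.factorial : ℚ) / (2 ^ k * k.factorial * (n - 2 * k).factorial)) *
          MvPolynomial.X 0 ^ (n - 2 * k) * MvPolynomial.X 1 ^ k :=
  main n
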